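/- arXiv:1308.4390 — 4 statements merged into one kernel-verified Lean document; each statement's English description precedes it below -/
import Mathlib

section
/- Let g be a symmetric invertible 4×4 real matrix with det g < 0 and let W have Weyl symmetries with respect to g. Then the left dual of W equals its right dual: for all a,b,c,d in Fin 4, (1/2) Σ_{e,h} η_{ab}{}^{eh} W_{ehcd} = (1/2) Σ_{e,h} η_{cd}{}^{eh} W_{abeh}. -/
open Finset

/-- The Levi-Civita alternating symbol on `Fin 4`: the sign of `(a,b,c,d)` as a
permutation of `(0,1,2,3)`, and `0` if two indices coincide. -/
noncomputable def eps4 (a b c d : Fin 4) : ℝ :=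
  (((b : ℕ) : ℝ) - ((a : ℕ) : ℝ)) * (((c : ℕ) : ℝ) - ((a : ℕ) : ℝ)) *
    (((d : ℕ) : ℝ) - ((a : ℕ) : ℝ)) * (((c : ℕ) : ℝ) - ((b : ℕ) : ℝ)) *
    (((d : ℕ) : ℝ) - ((b : ℕ) : ℝ)) * (((d : ℕ) : ℝ) - ((c : ℕ) : ℝ)) / 12

/-- The volume element `η_{abcd} = √(−det g)·ε_{abcd}`. -/
noncomputable def eta4 (g : Fin 4 → Fin 4 → ℝ) (a b c d : Fin 4) : ℝ :=
  Real.sqrt (-(Matrix.of g).det) * eps4 a b c d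


def epsN (a b c d : Fin 4) : ℤ :=
  ((b:ℤ)-(a:ℤ))*((c:ℤ)-(a:ℤ))*((d:ℤ)-(a:ℤ))*((c:ℤ)-(b:ℤ))*((d:ℤ)-(b:ℤ))*((d:ℤ)-(c:ℤ))

lemma eps4_eq_epsN (a b c d : Fin 4) : eps4 a b c d = (epsN a b c d : ℝ) / 12 := by
  simp only [eps4, epsN]
  push_cast
  ring

set_option maxRecDepth 10000 in
lemma epsN_I : ∀ m t p q r s : Fin 4,
    (if t = m then (1:ℤ) else 0) * epsN p q r s
      = (if p = m then 1 else 0) * epsN t q r s + (if q = m then 1 else 0) * epsN p t r s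
        + (if r = m then 1 else 0) * epsN p q t s + (if s = m then 1 else 0) * epsN p q r t := by
  decide

lemma epsN_p1 : ∀ a b c d : Fin 4, epsN a b c d = epsN c d a b := by decide
lemma epsN_p2 : ∀ p q t s : Fin 4, epsN p q t s = - epsN p s t q := by decide
lemma epsN_p3 : ∀ p q r t : Fin 4, epsN p q r t = epsN p r t q := by decide
lemma epsN_swap : ∀ a b c d : Fin 4, epsN a b c d = - epsN b a c d := by decide

lemma eps4_p1 (a b c d : Fin 4) : eps4 a b c d = eps4 c d a b := by
  rw [eps4_eq_epsN, eps4_eq_epsN, epsN_p1]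

lemma eps4_p2 (p q t s : Fin 4) : eps4 p q t s = - eps4 p s t q := by
  rw [eps4_eq_epsN, eps4_eq_epsN, epsN_p2]
  push_cast
  ring

lemma eps4_p3 (p q r t : Fin 4) : eps4 p q r t = eps4 p r t q := by
  rw [eps4_eq_epsN, eps4_eq_epsN, epsN_p3]

lemma eps4_swap (a b c d : Fin 4) : eps4 a b c d = - eps4 b a c d := by
  rw [eps4_eq_epsN, eps4_eq_epsN, epsN_swap]
  push_cast
  ring

lemma eps4_I (m t p q r s : Fin 4) :
    (if t = m then (1:ℝ) else 0) * eps4 p q r s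
      = (if p = m then 1 else 0) * eps4 t q r s + (if q = m then 1 else 0) * eps4 p t r s
        + (if r = m then 1 else 0) * eps4 p q t s + (if s = m then 1 else 0) * eps4 p q r t := by
  have h : ((((if t = m then (1:ℤ) else 0) * epsN p q r s : ℤ)) : ℝ)
      = (((if p = m then 1 else 0) * epsN t q r s + (if q = m then 1 else 0) * epsN p t r s
        + (if r = m then 1 else 0) * epsN p q t s + (if s = m then 1 else 0) * epsN p q r t : ℤ) : ℝ) := by
    exact_mod_cast congrArg (fun z : ℤ => (z : ℝ)) (epsN_I m t p q r s)
  simp only [Int.cast_mul, Int.cast_add, apply_ite (fun z : ℤ => (z : ℝ)), Int.cast_one,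
    Int.cast_zero] at h
  simp only [eps4_eq_epsN]
  linear_combination h / 12

lemma sum_swap4 (f : Fin 4 → Fin 4 → Fin 4 → Fin 4 → ℝ) :
    ∑ e, ∑ h, ∑ m, ∑ n, f e h m n = ∑ m, ∑ n, ∑ e, ∑ h, f e h m n := by
  calc ∑ e, ∑ h, ∑ m, ∑ n, f e h m n
      = ∑ e, ∑ m, ∑ h, ∑ n, f e h m n :=
        Finset.sum_congr rfl fun e _ => Finset.sum_comm
    _ = ∑ m, ∑ e, ∑ h, ∑ n, f e h m n := Finset.sum_comm
    _ = ∑ m, ∑ e, ∑ n, ∑ h, f e h m n :=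
        Finset.sum_congr rfl fun m _ => Finset.sum_congr rfl fun e _ => Finset.sum_comm
    _ = ∑ m, ∑ n, ∑ e, ∑ h, f e h m n :=
        Finset.sum_congr rfl fun m _ => Finset.sum_comm

lemma pairsym (T : Fin 4 → Fin 4 → Fin 4 → Fin 4 → ℝ)
    (h1 : ∀ a b c d, T a b c d = - T b a c d)
    (h2 : ∀ a b c d, T a b c d = - T a b d c)
    (hc : ∀ a b c d, T a b c d + T b c a d + T c a b d = 0)
    (a b c d : Fin 4) : T a b c d = T c d a b := by
  linear_combination (1/2) * h2 a b c d + (1/2) * hc a b c d - (1/2) * hc a b d c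
    - (1/2) * h1 a c b d + (1/2) * h2 a c b d - (1/2) * hc a c d b
    + (1/2) * h1 a d b c - (1/2) * h2 a d b c + (1/2) * h1 a d c b
    - (1/2) * h2 b c a d + (1/2) * hc b c d a + (1/2) * h2 b d a c
    - (1/2) * h1 b d c a - (1/2) * h2 c d a b

noncomputable def Ddual (M : Fin 4 → Fin 4 → Fin 4 → Fin 4 → ℝ) (a b c d : Fin 4) : ℝ :=
  ∑ m, ∑ n, eps4 a b m n * M m n c d

lemma Ddual_antisym1 (M : Fin 4 → Fin 4 → Fin 4 → Fin 4 → ℝ) (a b c d : Fin 4) :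
    Ddual M a b c d = - Ddual M b a c d := by
  simp only [Ddual, ← Finset.sum_neg_distrib]
  refine Finset.sum_congr rfl fun m _ => Finset.sum_congr rfl fun n _ => ?_
  rw [eps4_swap a b m n]; ring

lemma Ddual_antisym2 (M : Fin 4 → Fin 4 → Fin 4 → Fin 4 → ℝ)
    (hM2 : ∀ t u c d, M t u c d = - M t u d c) (a b c d : Fin 4) :
    Ddual M a b c d = - Ddual M a b d c := by
  simp only [Ddual, ← Finset.sum_neg_distrib]
  refine Finset.sum_congr rfl fun m _ => Finset.sum_congr rfl fun n _ => ?_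
  rw [hM2 m n c d]; ring

lemma collapse_delta (x : Fin 4) (c : ℝ) (f : Fin 4 → ℝ) :
    ∑ m, ((if x = m then (1:ℝ) else 0) * c) * f m = c * f x := by
  rw [Finset.sum_eq_single x]
  · simp
  · intro b _ hb; simp [Ne.symm hb]
  · simp

lemma Ddual_cyclic (M : Fin 4 → Fin 4 → Fin 4 → Fin 4 → ℝ)
    (tr1 : ∀ u v, ∑ t, M t u t v = 0)
    (tr2 : ∀ t v, ∑ q, M t q q v = 0)
    (p r s v : Fin 4) :
    Ddual M r s p v + Ddual M p r s v + Ddual M s p r v = 0 := by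
  have hA : ∀ u v p q r s : Fin 4,
      (∑ t, eps4 t q r s * M t u p v) + (∑ t, eps4 p t r s * M t u q v)
        + (∑ t, eps4 p q t s * M t u r v) + (∑ t, eps4 p q r t * M t u s v) = 0 := by
    intro u v p q r s
    have h0 : ∑ t, ∑ m, ((if t = m then (1:ℝ) else 0) * eps4 p q r s) * M t u m v
        = ∑ t, ∑ m, ((if p = m then (1:ℝ) else 0) * eps4 t q r s
            + (if q = m then (1:ℝ) else 0) * eps4 p t r s
            + (if r = m then (1:ℝ) else 0) * eps4 p q t s
            + (if s = m then (1:ℝ) else 0) * eps4 p q r t) * M t u m v :=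
      Finset.sum_congr rfl fun t _ => Finset.sum_congr rfl fun m _ => by rw [eps4_I]
    have hL : ∑ t, ∑ m, ((if t = m then (1:ℝ) else 0) * eps4 p q r s) * M t u m v = 0 := by
      rw [Finset.sum_congr rfl fun t (_ : t ∈ Finset.univ) =>
        collapse_delta t (eps4 p q r s) (fun m => M t u m v)]
      rw [← Finset.mul_sum, tr1 u v, mul_zero]
    have hR : ∑ t, ∑ m, ((if p = m then (1:ℝ) else 0) * eps4 t q r s
            + (if q = m then (1:ℝ) else 0) * eps4 p t r s
            + (if r = m then (1:ℝ) else 0) * eps4 p q t s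
            + (if s = m then (1:ℝ) else 0) * eps4 p q r t) * M t u m v
        = (∑ t, eps4 t q r s * M t u p v) + (∑ t, eps4 p t r s * M t u q v)
          + (∑ t, eps4 p q t s * M t u r v) + (∑ t, eps4 p q r t * M t u s v) := by
      have inner : ∀ t : Fin 4, ∑ m, ((if p = m then (1:ℝ) else 0) * eps4 t q r s
            + (if q = m then (1:ℝ) else 0) * eps4 p t r s
            + (if r = m then (1:ℝ) else 0) * eps4 p q t s
            + (if s = m then (1:ℝ) else 0) * eps4 p q r t) * M t u m v
          = eps4 t q r s * M t u p v + eps4 p t r s * M t u q v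
            + eps4 p q t s * M t u r v + eps4 p q r t * M t u s v := by
        intro t
        simp only [add_mul]
        rw [Finset.sum_add_distrib, Finset.sum_add_distrib, Finset.sum_add_distrib,
          collapse_delta, collapse_delta, collapse_delta, collapse_delta]
      rw [Finset.sum_congr rfl fun t _ => inner t]
      rw [Finset.sum_add_distrib, Finset.sum_add_distrib, Finset.sum_add_distrib]
    rw [h0, hR] at hL
    exact hL
  have hB0 : (∑ q, ∑ t, eps4 t q r s * M t q p v) + (∑ q, ∑ t, eps4 p t r s * M t q q v)
      + (∑ q, ∑ t, eps4 p q t s * M t q r v) + (∑ q, ∑ t, eps4 p q r t * M t q s v) = 0 := by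
    rw [← Finset.sum_add_distrib, ← Finset.sum_add_distrib, ← Finset.sum_add_distrib]
    exact Finset.sum_eq_zero fun q _ => hA q v p q r s
  have hS2 : ∑ q, ∑ t, eps4 p t r s * M t q q v = 0 := by
    rw [Finset.sum_comm]
    refine Finset.sum_eq_zero fun t _ => ?_
    rw [← Finset.mul_sum, tr2 t v, mul_zero]
  have hS1 : ∑ q, ∑ t, eps4 t q r s * M t q p v = Ddual M r s p v := by
    rw [Finset.sum_comm]
    exact Finset.sum_congr rfl fun t _ => Finset.sum_congr rfl fun q _ => by
      rw [eps4_p1 t q r s]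
  have hS3 : ∑ q, ∑ t, eps4 p q t s * M t q r v = - Ddual M p s r v := by
    rw [Finset.sum_comm]
    simp only [Ddual, ← Finset.sum_neg_distrib]
    exact Finset.sum_congr rfl fun t _ => Finset.sum_congr rfl fun q _ => by
      rw [eps4_p2 p q t s]; ring
  have hS4 : ∑ q, ∑ t, eps4 p q r t * M t q s v = Ddual M p r s v := by
    rw [Finset.sum_comm]
    exact Finset.sum_congr rfl fun t _ => Finset.sum_congr rfl fun q _ => by
      rw [eps4_p3 p q r t]
  have hanti := Ddual_antisym1 M s p r v
  rw [hS1, hS2, hS3, hS4] at hB0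
  linarith [hB0, hanti]

/-- For a tensor with Weyl symmetries in dimension 4 the left dual equals the right dual:
`(1/2) η_{ab}{}^{eh} W_{ehcd} = (1/2) η_{cd}{}^{eh} W_{abeh}`. -/
theorem weyl_left_dual_eq_right_dual
    (g ginv : Fin 4 → Fin 4 → ℝ)
    (hg : ∀ a b, g a b = g b a)
    (hginv : ∀ a b, ∑ c, ginv a c * g c b = if a = b then (1 : ℝ) else 0)
    (hdet : (Matrix.of g).det < 0)
    (W : Fin 4 → Fin 4 → Fin 4 → Fin 4 → ℝ)
    (hW1 : ∀ a b c d, W a b c d = - W b a c d)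
    (hW2 : ∀ a b c d, W a b c d = - W a b d c)
    (hW3 : ∀ a b c d, W a b c d = W c d a b)
    (hW4 : ∀ a b c d, W a b c d + W a c d b + W a d b c = 0)
    (hWtr : ∀ b d, ∑ a, ∑ c, ginv a c * W a b c d = 0)
    (a b c d : Fin 4) :
    (1 / 2) * (∑ e, ∑ h,
        (∑ m, ∑ n, ginv e m * ginv h n * eta4 g a b m n) * W e h c d)
      = (1 / 2) * (∑ e, ∑ h,
        (∑ m, ∑ n, ginv e m * ginv h n * eta4 g c d m n) * W a b e h) := by
  set k : ℝ := Real.sqrt (-(Matrix.of g).det) with hk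
  set M : Fin 4 → Fin 4 → Fin 4 → Fin 4 → ℝ :=
    fun m n c d => ∑ e, ∑ h, ginv e m * ginv h n * W e h c d with hM
  -- trace lemmas
  have tr1 : ∀ u v, ∑ t, M t u t v = 0 := by
    intro u v
    have step : ∑ t, M t u t v = ∑ h, ∑ e, ∑ t, ginv e t * ginv h u * W e h t v := by
      simp only [hM]
      calc ∑ t, ∑ e, ∑ h, ginv e t * ginv h u * W e h t v
          = ∑ t, ∑ h, ∑ e, ginv e t * ginv h u * W e h t v :=
            Finset.sum_congr rfl fun t _ => Finset.sum_comm
        _ = ∑ h, ∑ t, ∑ e, ginv e t * ginv h u * W e h t v := Finset.sum_comm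
        _ = ∑ h, ∑ e, ∑ t, ginv e t * ginv h u * W e h t v :=
            Finset.sum_congr rfl fun h _ => Finset.sum_comm
    rw [step]
    refine Finset.sum_eq_zero fun h _ => ?_
    have : ∑ e, ∑ t, ginv e t * ginv h u * W e h t v
        = ginv h u * ∑ e, ∑ t, ginv e t * W e h t v := by
      rw [Finset.mul_sum]
      exact Finset.sum_congr rfl fun e _ => by
        rw [Finset.mul_sum]
        exact Finset.sum_congr rfl fun t _ => by ring
    rw [this, hWtr h v, mul_zero]
  have tr2 : ∀ t v, ∑ q, M t q q v = 0 := by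
    intro t v
    have step : ∑ q, M t q q v = ∑ e, ∑ f, ∑ q, ginv e t * ginv f q * W e f q v := by
      simp only [hM]
      calc ∑ q, ∑ e, ∑ f, ginv e t * ginv f q * W e f q v
          = ∑ e, ∑ q, ∑ f, ginv e t * ginv f q * W e f q v := Finset.sum_comm
        _ = ∑ e, ∑ f, ∑ q, ginv e t * ginv f q * W e f q v :=
            Finset.sum_congr rfl fun e _ => Finset.sum_comm
    rw [step]
    refine Finset.sum_eq_zero fun e _ => ?_
    have h1 : ∑ f, ∑ q, ginv e t * ginv f q * W e f q v
        = -(ginv e t * ∑ f, ∑ q, ginv f q * W f e q v) := by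
      calc ∑ f, ∑ q, ginv e t * ginv f q * W e f q v
          = ∑ f, ∑ q, -(ginv e t * (ginv f q * W f e q v)) :=
            Finset.sum_congr rfl fun f _ => Finset.sum_congr rfl fun q _ => by
              rw [hW1 e f q v]; ring
        _ = -(ginv e t * ∑ f, ∑ q, ginv f q * W f e q v) := by
            simp only [Finset.sum_neg_distrib, ← Finset.mul_sum]
    rw [h1, hWtr e v, mul_zero, neg_zero]
  have hM2 : ∀ m n c d, M m n c d = - M m n d c := by
    intro m n c d
    simp only [hM, ← Finset.sum_neg_distrib]
    refine Finset.sum_congr rfl fun e _ => Finset.sum_congr rfl fun h _ => ?_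
    rw [hW2 e h c d]; ring
  -- rearrangement helper
  have key : ∀ (x y : Fin 4) (X : Fin 4 → Fin 4 → ℝ),
      ∑ e, ∑ h, (∑ m, ∑ n, ginv e m * ginv h n * eta4 g x y m n) * X e h
        = k * ∑ m, ∑ n, eps4 x y m n * (∑ e, ∑ h, ginv e m * ginv h n * X e h) := by
    intro x y X
    have expand : ∑ e, ∑ h, (∑ m, ∑ n, ginv e m * ginv h n * eta4 g x y m n) * X e h
        = ∑ e, ∑ h, ∑ m, ∑ n, (ginv e m * ginv h n * (k * eps4 x y m n)) * X e h := by
      refine Finset.sum_congr rfl fun e _ => Finset.sum_congr rfl fun h _ => ?_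
      rw [Finset.sum_mul]
      refine Finset.sum_congr rfl fun m _ => ?_
      rw [Finset.sum_mul]
      refine Finset.sum_congr rfl fun n _ => ?_
      rw [eta4, ← hk]
    rw [expand, sum_swap4, Finset.mul_sum]
    refine Finset.sum_congr rfl fun m _ => ?_
    rw [Finset.mul_sum]
    refine Finset.sum_congr rfl fun n _ => ?_
    rw [Finset.mul_sum, Finset.mul_sum]
    refine Finset.sum_congr rfl fun e _ => ?_
    rw [Finset.mul_sum, Finset.mul_sum]
    refine Finset.sum_congr rfl fun h _ => ?_
    ring
  have hLHS : ∑ e, ∑ h, (∑ m, ∑ n, ginv e m * ginv h n * eta4 g a b m n) * W e h c d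
      = k * Ddual M a b c d := by
    rw [key a b (fun e h => W e h c d)]
    rfl
  have hRHS : ∑ e, ∑ h, (∑ m, ∑ n, ginv e m * ginv h n * eta4 g c d m n) * W a b e h
      = k * Ddual M c d a b := by
    rw [key c d (fun e h => W a b e h)]
    congr 1
    refine Finset.sum_congr rfl fun m _ => Finset.sum_congr rfl fun n _ => ?_
    simp only [Ddual, hM]
    congr 1
    refine Finset.sum_congr rfl fun e _ => Finset.sum_congr rfl fun h _ => ?_
    rw [hW3 a b e h]
  rw [hLHS, hRHS]
  have hcyc : ∀ a b c d, Ddual M a b c d + Ddual M b c a d + Ddual M c a b d = 0 := by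
    intro a b c d
    have := Ddual_cyclic M tr1 tr2 c a b d
    linarith
  rw [pairsym (Ddual M) (Ddual_antisym1 M) (Ddual_antisym2 M hM2) hcyc a b c d]
end

section
/- Let g be a symmetric invertible 4×4 real matrix, let W have Weyl symmetries with respect to g, let S be a symmetric 4×4 real matrix, and let K_{jabc} be defined as in the context. Then the trace of K over its last two indices vanishes: Σ_{b,c} g^{bc} K_{jabc} = 0 for all j,a in Fin 4. -/
open Finset

/-- The tensor `K_{jabc}` built from the Schouten-type tensor `S` and the Weyl-type
tensor `W`:
`K_{jabc} = S_c{}^{d} W_{abjd} + S_b{}^{d} W_{acjd} + S_a{}^{d} W_{bdcj} + S_a{}^{d} W_{bjcd}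
  − g_{bc} S^{de} W_{adje} − 2 g_{aj} S^{de} W_{bdce} + g_{ac} S^{de} W_{bdje}
  + g_{ab} S^{de} W_{cdje}`. -/
noncomputable def Ktensor (g ginv S : Fin 4 → Fin 4 → ℝ)
    (W : Fin 4 → Fin 4 → Fin 4 → Fin 4 → ℝ) (j a b c : Fin 4) : ℝ :=
  (∑ d, (∑ e, S c e * ginv e d) * W a b j d)
    + (∑ d, (∑ e, S b e * ginv e d) * W a c j d)
    + (∑ d, (∑ e, S a e * ginv e d) * W b d c j)
    + (∑ d, (∑ e, S a e * ginv e d) * W b j c d)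
    - g b c * (∑ d, ∑ e, (∑ p, ∑ q, ginv d p * ginv e q * S p q) * W a d j e)
    - 2 * g a j * (∑ d, ∑ e, (∑ p, ∑ q, ginv d p * ginv e q * S p q) * W b d c e)
    + g a c * (∑ d, ∑ e, (∑ p, ∑ q, ginv d p * ginv e q * S p q) * W b d j e)
    + g a b * (∑ d, ∑ e, (∑ p, ∑ q, ginv d p * ginv e q * S p q) * W c d j e)

/-- The trace of `K` over its last two indices vanishes: `g^{bc} K_{jabc} = 0`. -/
theorem Ktensor_traceless_last_two
    (g ginv : Fin 4 → Fin 4 → ℝ)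
    (hg : ∀ a b, g a b = g b a)
    (hginv : ∀ a b, ∑ c, ginv a c * g c b = if a = b then (1 : ℝ) else 0)
    (W : Fin 4 → Fin 4 → Fin 4 → Fin 4 → ℝ)
    (hW1 : ∀ a b c d, W a b c d = - W b a c d)
    (hW2 : ∀ a b c d, W a b c d = - W a b d c)
    (hW3 : ∀ a b c d, W a b c d = W c d a b)
    (hW4 : ∀ a b c d, W a b c d + W a c d b + W a d b c = 0)
    (hWtr : ∀ b d, ∑ a, ∑ c, ginv a c * W a b c d = 0)
    (S : Fin 4 → Fin 4 → ℝ)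
    (hS : ∀ a b, S a b = S b a)
    (j a : Fin 4) :
    ∑ b, ∑ c, ginv b c * Ktensor g ginv S W j a b c = 0 := by
  -- matrix facts: two-sided inverse and symmetry of ginv
  have hAB : (Matrix.of ginv) * (Matrix.of g) = 1 := by
    ext x y
    simpa [Matrix.mul_apply, Matrix.one_apply] using hginv x y
  have hBA : (Matrix.of g) * (Matrix.of ginv) = 1 := mul_eq_one_comm.mp hAB
  have hgi2 : ∀ a b, ∑ c, g a c * ginv c b = if a = b then (1 : ℝ) else 0 := by
    intro x y
    simpa [Matrix.mul_apply, Matrix.one_apply] using congrFun (congrFun hBA x) y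
  have hginvsymm : ∀ a b, ginv a b = ginv b a := by
    have hBT : Matrix.transpose (Matrix.of g) = Matrix.of g := by ext x y; exact hg y x
    have hATB : Matrix.transpose (Matrix.of ginv) * (Matrix.of g) = 1 := by
      calc Matrix.transpose (Matrix.of ginv) * (Matrix.of g)
          = Matrix.transpose (Matrix.of ginv) * Matrix.transpose (Matrix.of g) := by rw [hBT]
        _ = Matrix.transpose ((Matrix.of g) * (Matrix.of ginv)) := by rw [Matrix.transpose_mul]
        _ = 1 := by rw [hBA, Matrix.transpose_one]
    have hAT : Matrix.transpose (Matrix.of ginv) = Matrix.of ginv := by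
      calc Matrix.transpose (Matrix.of ginv)
          = Matrix.transpose (Matrix.of ginv) * ((Matrix.of g) * (Matrix.of ginv)) := by
            rw [hBA, mul_one]
        _ = (Matrix.transpose (Matrix.of ginv) * (Matrix.of g)) * (Matrix.of ginv) := by
            rw [mul_assoc]
        _ = Matrix.of ginv := by rw [hATB, one_mul]
    intro x y
    exact congrFun (congrFun hAT y) x
  -- basic contraction vanishing
  have hzero : ∀ (K : ℝ) (x y : Fin 4), ∑ b, ∑ c, ginv b c * (K * W b x c y) = 0 := by
    intro K x y
    calc ∑ b, ∑ c, ginv b c * (K * W b x c y)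
        = K * ∑ b, ∑ c, ginv b c * W b x c y := by
          rw [Finset.mul_sum]
          refine Finset.sum_congr rfl fun b _ => ?_
          rw [Finset.mul_sum]
          refine Finset.sum_congr rfl fun c _ => ?_
          ring
      _ = 0 := by rw [hWtr x y, mul_zero]
  -- Piece 1
  have hP1 : (∑ b, ∑ c, ginv b c * ∑ d, (∑ e, S c e * ginv e d) * W a b j d)
      = ∑ d, ∑ e, (∑ p, ∑ q, ginv d p * ginv e q * S p q) * W a d j e := by
    simp only [Finset.mul_sum, Finset.sum_mul]
    refine Finset.sum_congr rfl fun b _ => ?_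
    refine (Finset.sum_comm).trans ?_
    refine Finset.sum_congr rfl fun d _ => ?_
    refine Finset.sum_congr rfl fun c _ => ?_
    refine Finset.sum_congr rfl fun e _ => ?_
    rw [hginvsymm e d]
    ring
  -- Piece 2
  have hP2 : (∑ b, ∑ c, ginv b c * ∑ d, (∑ e, S b e * ginv e d) * W a c j d)
      = ∑ d, ∑ e, (∑ p, ∑ q, ginv d p * ginv e q * S p q) * W a d j e := by
    simp only [Finset.mul_sum, Finset.sum_mul]
    refine (Finset.sum_comm).trans ?_
    refine Finset.sum_congr rfl fun c _ => ?_
    refine (Finset.sum_comm).trans ?_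
    refine Finset.sum_congr rfl fun d _ => ?_
    refine Finset.sum_congr rfl fun b _ => ?_
    refine Finset.sum_congr rfl fun e _ => ?_
    rw [hginvsymm b c, hginvsymm e d]
    ring
  -- Piece 3
  have hP3 : (∑ b, ∑ c, ginv b c * ∑ d, (∑ e, S a e * ginv e d) * W b d c j) = 0 := by
    calc ∑ b, ∑ c, ginv b c * ∑ d, (∑ e, S a e * ginv e d) * W b d c j
        = ∑ b, ∑ c, ∑ d, ginv b c * ((∑ e, S a e * ginv e d) * W b d c j) := by
          refine Finset.sum_congr rfl fun b _ => Finset.sum_congr rfl fun c _ => ?_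
          rw [Finset.mul_sum]
      _ = ∑ b, ∑ d, ∑ c, ginv b c * ((∑ e, S a e * ginv e d) * W b d c j) :=
          Finset.sum_congr rfl fun b _ => Finset.sum_comm
      _ = ∑ d, ∑ b, ∑ c, ginv b c * ((∑ e, S a e * ginv e d) * W b d c j) :=
          Finset.sum_comm
      _ = 0 := Finset.sum_eq_zero fun d _ => hzero (∑ e, S a e * ginv e d) d j
  -- Piece 4
  have hP4 : (∑ b, ∑ c, ginv b c * ∑ d, (∑ e, S a e * ginv e d) * W b j c d) = 0 := by
    calc ∑ b, ∑ c, ginv b c * ∑ d, (∑ e, S a e * ginv e d) * W b j c d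
        = ∑ b, ∑ c, ∑ d, ginv b c * ((∑ e, S a e * ginv e d) * W b j c d) := by
          refine Finset.sum_congr rfl fun b _ => Finset.sum_congr rfl fun c _ => ?_
          rw [Finset.mul_sum]
      _ = ∑ b, ∑ d, ∑ c, ginv b c * ((∑ e, S a e * ginv e d) * W b j c d) :=
          Finset.sum_congr rfl fun b _ => Finset.sum_comm
      _ = ∑ d, ∑ b, ∑ c, ginv b c * ((∑ e, S a e * ginv e d) * W b j c d) :=
          Finset.sum_comm
      _ = 0 := Finset.sum_eq_zero fun d _ => hzero (∑ e, S a e * ginv e d) j d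
  -- Piece 5
  have hP5 : (∑ b, ∑ c, ginv b c *
        (g b c * ∑ d, ∑ e, (∑ p, ∑ q, ginv d p * ginv e q * S p q) * W a d j e))
      = 4 * ∑ d, ∑ e, (∑ p, ∑ q, ginv d p * ginv e q * S p q) * W a d j e := by
    calc ∑ b, ∑ c, ginv b c *
          (g b c * ∑ d, ∑ e, (∑ p, ∑ q, ginv d p * ginv e q * S p q) * W a d j e)
        = ∑ b, (∑ c, ginv b c * g c b) *
            (∑ d, ∑ e, (∑ p, ∑ q, ginv d p * ginv e q * S p q) * W a d j e) := by
          refine Finset.sum_congr rfl fun b _ => ?_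
          rw [Finset.sum_mul]
          refine Finset.sum_congr rfl fun c _ => ?_
          rw [hg b c]
          ring
      _ = ∑ b : Fin 4, (1 : ℝ) *
            (∑ d, ∑ e, (∑ p, ∑ q, ginv d p * ginv e q * S p q) * W a d j e) := by
          refine Finset.sum_congr rfl fun b _ => ?_
          rw [hginv b b, if_pos rfl]
      _ = 4 * ∑ d, ∑ e, (∑ p, ∑ q, ginv d p * ginv e q * S p q) * W a d j e := by
          rw [Finset.sum_const, Finset.card_univ]
          simp [nsmul_eq_mul]
  -- Piece 6
  have hP6 : (∑ b, ∑ c, ginv b c *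
        (2 * g a j * ∑ d, ∑ e, (∑ p, ∑ q, ginv d p * ginv e q * S p q) * W b d c e)) = 0 := by
    have h6 : ∀ (T : Fin 4 → Fin 4 → ℝ) (K : ℝ),
        (∑ b, ∑ c, ginv b c * (K * ∑ d, ∑ e, T d e * W b d c e)) = 0 := by
      intro T K
      calc ∑ b, ∑ c, ginv b c * (K * ∑ d, ∑ e, T d e * W b d c e)
          = ∑ b, ∑ c, ∑ d, ∑ e, ginv b c * ((K * T d e) * W b d c e) := by
            refine Finset.sum_congr rfl fun b _ => Finset.sum_congr rfl fun c _ => ?_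
            rw [Finset.mul_sum]
            have hmid : K * ∑ d, ∑ e, T d e * W b d c e
                = ∑ d, ∑ e, (K * T d e) * W b d c e := by
              rw [Finset.mul_sum]
              refine Finset.sum_congr rfl fun d _ => ?_
              rw [Finset.mul_sum]
              refine Finset.sum_congr rfl fun e _ => ?_
              ring
            rw [← Finset.mul_sum, hmid, Finset.mul_sum]
            refine Finset.sum_congr rfl fun d _ => ?_
            rw [Finset.mul_sum]
        _ = ∑ b, ∑ d, ∑ c, ∑ e, ginv b c * ((K * T d e) * W b d c e) :=
            Finset.sum_congr rfl fun b _ => Finset.sum_comm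
        _ = ∑ d, ∑ b, ∑ c, ∑ e, ginv b c * ((K * T d e) * W b d c e) :=
            Finset.sum_comm
        _ = ∑ d, ∑ b, ∑ e, ∑ c, ginv b c * ((K * T d e) * W b d c e) :=
            Finset.sum_congr rfl fun d _ =>
              Finset.sum_congr rfl fun b _ => Finset.sum_comm
        _ = ∑ d, ∑ e, ∑ b, ∑ c, ginv b c * ((K * T d e) * W b d c e) :=
            Finset.sum_congr rfl fun d _ => Finset.sum_comm
        _ = 0 := Finset.sum_eq_zero fun d _ => Finset.sum_eq_zero fun e _ =>
            hzero (K * T d e) d e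
    exact h6 (fun d e => ∑ p, ∑ q, ginv d p * ginv e q * S p q) (2 * g a j)
  -- Piece 7
  have hP7 : (∑ b, ∑ c, ginv b c *
        (g a c * ∑ d, ∑ e, (∑ p, ∑ q, ginv d p * ginv e q * S p q) * W b d j e))
      = ∑ d, ∑ e, (∑ p, ∑ q, ginv d p * ginv e q * S p q) * W a d j e := by
    calc ∑ b, ∑ c, ginv b c *
          (g a c * ∑ d, ∑ e, (∑ p, ∑ q, ginv d p * ginv e q * S p q) * W b d j e)
        = ∑ b, (if b = a then (1 : ℝ) else 0) *
            (∑ d, ∑ e, (∑ p, ∑ q, ginv d p * ginv e q * S p q) * W b d j e) := by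
          refine Finset.sum_congr rfl fun b _ => ?_
          rw [← hginv b a, Finset.sum_mul]
          refine Finset.sum_congr rfl fun c _ => ?_
          rw [hg a c]
          ring
      _ = ∑ d, ∑ e, (∑ p, ∑ q, ginv d p * ginv e q * S p q) * W a d j e := by
          simp [ite_mul, Finset.sum_ite_eq']
  -- Piece 8
  have hP8 : (∑ b, ∑ c, ginv b c *
        (g a b * ∑ d, ∑ e, (∑ p, ∑ q, ginv d p * ginv e q * S p q) * W c d j e))
      = ∑ d, ∑ e, (∑ p, ∑ q, ginv d p * ginv e q * S p q) * W a d j e := by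
    refine (Finset.sum_comm).trans ?_
    calc ∑ c, ∑ b, ginv b c *
          (g a b * ∑ d, ∑ e, (∑ p, ∑ q, ginv d p * ginv e q * S p q) * W c d j e)
        = ∑ c, (if c = a then (1 : ℝ) else 0) *
            (∑ d, ∑ e, (∑ p, ∑ q, ginv d p * ginv e q * S p q) * W c d j e) := by
          refine Finset.sum_congr rfl fun c _ => ?_
          rw [← hginv c a, Finset.sum_mul]
          refine Finset.sum_congr rfl fun b _ => ?_
          rw [hg a b, hginvsymm b c]
          ring
      _ = ∑ d, ∑ e, (∑ p, ∑ q, ginv d p * ginv e q * S p q) * W a d j e := by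
          simp [ite_mul, Finset.sum_ite_eq']
  -- assemble
  calc ∑ b, ∑ c, ginv b c * Ktensor g ginv S W j a b c
      = ∑ b, ∑ c,
          (ginv b c * ∑ d, (∑ e, S c e * ginv e d) * W a b j d
            + ginv b c * ∑ d, (∑ e, S b e * ginv e d) * W a c j d
            + ginv b c * ∑ d, (∑ e, S a e * ginv e d) * W b d c j
            + ginv b c * ∑ d, (∑ e, S a e * ginv e d) * W b j c d
            - ginv b c * (g b c * ∑ d, ∑ e, (∑ p, ∑ q, ginv d p * ginv e q * S p q) * W a d j e)
            - ginv b c * (2 * g a j * ∑ d, ∑ e, (∑ p, ∑ q, ginv d p * ginv e q * S p q) * W b d c e)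
            + ginv b c * (g a c * ∑ d, ∑ e, (∑ p, ∑ q, ginv d p * ginv e q * S p q) * W b d j e)
            + ginv b c * (g a b * ∑ d, ∑ e, (∑ p, ∑ q, ginv d p * ginv e q * S p q) * W c d j e)) := by
        refine Finset.sum_congr rfl fun b _ => Finset.sum_congr rfl fun c _ => ?_
        simp only [Ktensor]
        ring
    _ = 0 := by
        simp only [Finset.sum_add_distrib, Finset.sum_sub_distrib]
        rw [hP1, hP2, hP3, hP4, hP5, hP6, hP7, hP8]
        ring
end

section
/- Let g be a symmetric invertible 4×4 real matrix, let W have Weyl symmetries with respect to g, let S be a symmetric 4×4 real matrix, and let K_{jabc} be defined as in the context. Then the trace of K over its second and third indices vanishes: Σ_{a,b} g^{ab} K_{jabc} = 0 for all j,c in Fin 4. -/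
open Finset Matrix

/-- Raised version of `S`: `S^{de}`. -/
noncomputable def SupT (ginv S : Fin 4 → Fin 4 → ℝ) (d e : Fin 4) : ℝ :=
  ∑ p, ∑ q, ginv d p * ginv e q * S p q

lemma symm_antisymm_sum (P Q : Fin 4 → Fin 4 → ℝ) (hP : ∀ a b, P a b = P b a)
    (hQ : ∀ a b, Q a b = - Q b a) : ∑ a, ∑ b, P a b * Q a b = 0 := by
  have h : (∑ a, ∑ b, P a b * Q a b) = ∑ a, ∑ b, -(P a b * Q a b) := by
    rw [Finset.sum_comm]
    refine Finset.sum_congr rfl fun a _ => Finset.sum_congr rfl fun b _ => ?_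
    rw [hP b a, hQ b a]; ring
  simp only [Finset.sum_neg_distrib] at h
  linarith

lemma swap_mid (F : Fin 4 → Fin 4 → Fin 4 → Fin 4 → ℝ) :
    ∑ a, ∑ b, ∑ d, ∑ e, F a b d e = ∑ a, ∑ d, ∑ b, ∑ e, F a b d e :=
  Finset.sum_congr rfl fun a _ => Finset.sum_comm

lemma reorder_bd (F : Fin 4 → Fin 4 → Fin 4 → Fin 4 → ℝ) :
    ∑ a, ∑ b, ∑ d, ∑ e, F a b d e = ∑ b, ∑ d, ∑ a, ∑ e, F a b d e := by
  rw [Finset.sum_comm]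
  exact Finset.sum_congr rfl fun b _ => Finset.sum_comm

lemma comb4 (f g h k : Fin 4 → Fin 4 → ℝ) :
    (∑ a, ∑ b, f a b) + (∑ a, ∑ b, g a b) - 2 * (∑ a, ∑ b, h a b)
      + 4 * (∑ a, ∑ b, k a b)
    = ∑ a, ∑ b, (f a b + g a b - 2 * h a b + 4 * k a b) := by
  simp only [Finset.sum_add_distrib, Finset.sum_sub_distrib, Finset.mul_sum]

/-- The trace of `K` over its second and third indices vanishes. -/
theorem Ktensor_traceless_middle_two
    (g ginv : Fin 4 → Fin 4 → ℝ)
    (hg : ∀ a b, g a b = g b a)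
    (hginv : ∀ a b, ∑ c, ginv a c * g c b = if a = b then (1 : ℝ) else 0)
    (W : Fin 4 → Fin 4 → Fin 4 → Fin 4 → ℝ)
    (hW1 : ∀ a b c d, W a b c d = - W b a c d)
    (hW2 : ∀ a b c d, W a b c d = - W a b d c)
    (hW3 : ∀ a b c d, W a b c d = W c d a b)
    (hW4 : ∀ a b c d, W a b c d + W a c d b + W a d b c = 0)
    (hWtr : ∀ b d, ∑ a, ∑ c, ginv a c * W a b c d = 0)
    (S : Fin 4 → Fin 4 → ℝ)
    (hS : ∀ a b, S a b = S b a)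
    (j c : Fin 4) :
    ∑ a, ∑ b, ginv a b * Ktensor g ginv S W j a b c = 0 := by
  -- matrix inverse facts
  have hGiG : Matrix.of ginv * Matrix.of g = 1 := by
    ext a b
    simpa [Matrix.mul_apply, Matrix.one_apply] using hginv a b
  have hGGi : Matrix.of g * Matrix.of ginv = 1 := mul_eq_one_comm.mp hGiG
  have hGt : (Matrix.of g)ᵀ = Matrix.of g := by
    ext a b; simp [Matrix.transpose_apply, hg a b]
  have hGit : (Matrix.of ginv)ᵀ * Matrix.of g = 1 := by
    have h := congrArg Matrix.transpose hGGi
    rw [Matrix.transpose_mul, hGt, Matrix.transpose_one] at h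
    exact h
  have hGiEq : (Matrix.of ginv)ᵀ = Matrix.of ginv := by
    calc (Matrix.of ginv)ᵀ
        = (Matrix.of ginv)ᵀ * (Matrix.of g * Matrix.of ginv) := by rw [hGGi, mul_one]
      _ = ((Matrix.of ginv)ᵀ * Matrix.of g) * Matrix.of ginv := by rw [mul_assoc]
      _ = Matrix.of ginv := by rw [hGit, one_mul]
  have his : ∀ a b, ginv a b = ginv b a := by
    intro a b
    simpa using congrFun (congrFun hGiEq b) a
  have hSupSymm : ∀ d e, SupT ginv S d e = SupT ginv S e d := by
    intro d e
    unfold SupT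
    rw [Finset.sum_comm]
    refine Finset.sum_congr rfl fun p _ => Finset.sum_congr rfl fun q _ => ?_
    rw [hS q p]; ring
  -- the eight contracted terms
  have T1 : ∑ a, ∑ b, ginv a b * (∑ d, (∑ e, S c e * ginv e d) * W a b j d) = 0 := by
    refine symm_antisymm_sum ginv _ his fun a b => ?_
    rw [← Finset.sum_neg_distrib]
    refine Finset.sum_congr rfl fun d _ => ?_
    rw [hW1 a b j d]; ring
  have T2 : ∑ a, ∑ b, ginv a b * (∑ d, (∑ e, S b e * ginv e d) * W a c j d)
      = ∑ a, ∑ d, SupT ginv S a d * W a c j d := by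
    calc ∑ a, ∑ b, ginv a b * (∑ d, (∑ e, S b e * ginv e d) * W a c j d)
        = ∑ a, ∑ b, ∑ d, ∑ e, ginv a b * (S b e * ginv e d * W a c j d) := by
          refine Finset.sum_congr rfl fun a _ => Finset.sum_congr rfl fun b _ => ?_
          rw [Finset.mul_sum]
          refine Finset.sum_congr rfl fun d _ => ?_
          rw [Finset.sum_mul, Finset.mul_sum]
      _ = ∑ a, ∑ d, ∑ b, ∑ e, ginv a b * (S b e * ginv e d * W a c j d) := swap_mid _
      _ = ∑ a, ∑ d, SupT ginv S a d * W a c j d := by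
          refine Finset.sum_congr rfl fun a _ => Finset.sum_congr rfl fun d _ => ?_
          unfold SupT
          rw [Finset.sum_mul]
          refine Finset.sum_congr rfl fun b _ => ?_
          rw [Finset.sum_mul]
          refine Finset.sum_congr rfl fun e _ => ?_
          rw [his e d]; ring
  have T34 : ∀ (V : Fin 4 → Fin 4 → ℝ),
      ∑ a, ∑ b, ginv a b * (∑ d, (∑ e, S a e * ginv e d) * V b d)
      = ∑ b, ∑ d, SupT ginv S b d * V b d := by
    intro V
    calc ∑ a, ∑ b, ginv a b * (∑ d, (∑ e, S a e * ginv e d) * V b d)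
        = ∑ a, ∑ b, ∑ d, ∑ e, ginv a b * (S a e * ginv e d * V b d) := by
          refine Finset.sum_congr rfl fun a _ => Finset.sum_congr rfl fun b _ => ?_
          rw [Finset.mul_sum]
          refine Finset.sum_congr rfl fun d _ => ?_
          rw [Finset.sum_mul, Finset.mul_sum]
      _ = ∑ b, ∑ d, ∑ a, ∑ e, ginv a b * (S a e * ginv e d * V b d) := reorder_bd _
      _ = ∑ b, ∑ d, SupT ginv S b d * V b d := by
          refine Finset.sum_congr rfl fun b _ => Finset.sum_congr rfl fun d _ => ?_
          unfold SupT
          rw [Finset.sum_mul]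
          refine Finset.sum_congr rfl fun a _ => ?_
          rw [Finset.sum_mul]
          refine Finset.sum_congr rfl fun e _ => ?_
          rw [his a b, his e d]; ring
  have T3 : ∑ a, ∑ b, ginv a b * (∑ d, (∑ e, S a e * ginv e d) * W b d c j) = 0 := by
    rw [T34 (fun b d => W b d c j)]
    exact symm_antisymm_sum _ _ hSupSymm fun b d => hW1 b d c j
  have T4 : ∑ a, ∑ b, ginv a b * (∑ d, (∑ e, S a e * ginv e d) * W b j c d)
      = ∑ b, ∑ d, SupT ginv S b d * W b j c d := T34 (fun b d => W b j c d)
  -- delta contractions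
  have T5 : ∑ a, ∑ b, ginv a b *
        (g b c * (∑ d, ∑ e, SupT ginv S d e * W a d j e))
      = ∑ d, ∑ e, SupT ginv S d e * W c d j e := by
    calc ∑ a, ∑ b, ginv a b * (g b c * (∑ d, ∑ e, SupT ginv S d e * W a d j e))
        = ∑ a, (if a = c then (1:ℝ) else 0) * (∑ d, ∑ e, SupT ginv S d e * W a d j e) := by
          refine Finset.sum_congr rfl fun a _ => ?_
          rw [← hginv a c, Finset.sum_mul]
          refine Finset.sum_congr rfl fun b _ => by ring
      _ = ∑ d, ∑ e, SupT ginv S d e * W c d j e := by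
          simp
  have T6 : ∑ a, ∑ b, ginv a b *
        (2 * g a j * (∑ d, ∑ e, SupT ginv S d e * W b d c e))
      = 2 * ∑ d, ∑ e, SupT ginv S d e * W j d c e := by
    rw [Finset.sum_comm]
    calc ∑ b, ∑ a, ginv a b * (2 * g a j * (∑ d, ∑ e, SupT ginv S d e * W b d c e))
        = ∑ b, (if b = j then (1:ℝ) else 0) * (2 * (∑ d, ∑ e, SupT ginv S d e * W b d c e)) := by
          refine Finset.sum_congr rfl fun b _ => ?_
          rw [← hginv b j, Finset.sum_mul]
          refine Finset.sum_congr rfl fun a _ => ?_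
          rw [his a b]; ring
      _ = 2 * ∑ d, ∑ e, SupT ginv S d e * W j d c e := by
          simp
  have T7 : ∑ a, ∑ b, ginv a b *
        (g a c * (∑ d, ∑ e, SupT ginv S d e * W b d j e))
      = ∑ d, ∑ e, SupT ginv S d e * W c d j e := by
    rw [Finset.sum_comm]
    calc ∑ b, ∑ a, ginv a b * (g a c * (∑ d, ∑ e, SupT ginv S d e * W b d j e))
        = ∑ b, (if b = c then (1:ℝ) else 0) * (∑ d, ∑ e, SupT ginv S d e * W b d j e) := by
          refine Finset.sum_congr rfl fun b _ => ?_
          rw [← hginv b c, Finset.sum_mul]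
          refine Finset.sum_congr rfl fun a _ => ?_
          rw [his a b]; ring
      _ = ∑ d, ∑ e, SupT ginv S d e * W c d j e := by
          simp
  have T8 : ∑ a, ∑ b, ginv a b *
        (g a b * (∑ d, ∑ e, SupT ginv S d e * W c d j e))
      = 4 * ∑ d, ∑ e, SupT ginv S d e * W c d j e := by
    calc ∑ a, ∑ b, ginv a b * (g a b * (∑ d, ∑ e, SupT ginv S d e * W c d j e))
        = ∑ a, (if a = a then (1:ℝ) else 0) * (∑ d, ∑ e, SupT ginv S d e * W c d j e) := by
          refine Finset.sum_congr rfl fun a _ => ?_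
          rw [← hginv a a, Finset.sum_mul]
          refine Finset.sum_congr rfl fun b _ => ?_
          rw [hg b a]; ring
      _ = 4 * ∑ d, ∑ e, SupT ginv S d e * W c d j e := by
          simp [Finset.sum_const]
  -- combination
  have zero3 : ∑ d, ∑ e, SupT ginv S d e * W d e j c = 0 :=
    symm_antisymm_sum _ _ hSupSymm fun d e => hW1 d e j c
  have key : ∀ d e : Fin 4,
      W d c j e + W d j c e - 2 * W j d c e + 4 * W c d j e
        = -3 * W d e j c := by
    intro d e
    have h1 := hW1 j d c e
    have h2 := hW1 c d j e
    have h3 := hW4 d j c e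
    have h4 := hW2 d c e j
    linarith
  have merge : (∑ d, ∑ e, SupT ginv S d e * W d c j e)
      + (∑ d, ∑ e, SupT ginv S d e * W d j c e)
      - 2 * (∑ d, ∑ e, SupT ginv S d e * W j d c e)
      + 4 * (∑ d, ∑ e, SupT ginv S d e * W c d j e) = 0 := by
    rw [comb4]
    calc ∑ d, ∑ e, (SupT ginv S d e * W d c j e + SupT ginv S d e * W d j c e
            - 2 * (SupT ginv S d e * W j d c e) + 4 * (SupT ginv S d e * W c d j e))
        = ∑ d, ∑ e, (-3) * (SupT ginv S d e * W d e j c) := by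
          refine Finset.sum_congr rfl fun d _ => Finset.sum_congr rfl fun e _ => ?_
          linear_combination SupT ginv S d e * key d e
      _ = (-3) * ∑ d, ∑ e, SupT ginv S d e * W d e j c := by
          simp [Finset.mul_sum]
      _ = 0 := by rw [zero3]; ring
  -- assemble
  have expand : ∑ a, ∑ b, ginv a b * Ktensor g ginv S W j a b c
      = (∑ a, ∑ b, ginv a b * (∑ d, (∑ e, S c e * ginv e d) * W a b j d))
      + (∑ a, ∑ b, ginv a b * (∑ d, (∑ e, S b e * ginv e d) * W a c j d))
      + (∑ a, ∑ b, ginv a b * (∑ d, (∑ e, S a e * ginv e d) * W b d c j))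
      + (∑ a, ∑ b, ginv a b * (∑ d, (∑ e, S a e * ginv e d) * W b j c d))
      - (∑ a, ∑ b, ginv a b * (g b c * (∑ d, ∑ e, SupT ginv S d e * W a d j e)))
      - (∑ a, ∑ b, ginv a b * (2 * g a j * (∑ d, ∑ e, SupT ginv S d e * W b d c e)))
      + (∑ a, ∑ b, ginv a b * (g a c * (∑ d, ∑ e, SupT ginv S d e * W b d j e)))
      + (∑ a, ∑ b, ginv a b * (g a b * (∑ d, ∑ e, SupT ginv S d e * W c d j e))) := by
    simp only [← Finset.sum_add_distrib, ← Finset.sum_sub_distrib]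
    refine Finset.sum_congr rfl fun a _ => Finset.sum_congr rfl fun b _ => ?_
    unfold Ktensor SupT
    ring
  rw [expand, T1, T2, T3, T4, T5, T6, T7, T8]
  linarith [merge]
end

section
/- Let g be a symmetric invertible 4×4 real matrix, let W have Weyl symmetries with respect to g, let S be a symmetric 4×4 real matrix, and let K_{jabc} be defined as in the context. Then: (i) K is symmetric in its last two indices, K_{jabc} = K_{jacb}; and (ii) the array N_{j,cab} := (1/3)(K_{jabc} − K_{jbac}) is antisymmetric in its last two indices (a,b) and satisfies the cyclic identity N_{j,cab} + N_{j,abc} + N_{j,bca} = 0 for all j,a,b,c (equivalently, its total antisymmetrization over (c,a,b) vanishes, so N has the algebraic symmetries of a Lanczos potential). -/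
open Finset

/-- `N_{j,cab} = (1/3)(K_{jabc} − K_{jbac})`, a Lanczos candidate. -/
noncomputable def Ntensor (g ginv S : Fin 4 → Fin 4 → ℝ)
    (W : Fin 4 → Fin 4 → Fin 4 → Fin 4 → ℝ) (j c a b : Fin 4) : ℝ :=
  (1 / 3) * (Ktensor g ginv S W j a b c - Ktensor g ginv S W j b a c)

lemma Ksymm_aux
    (g ginv : Fin 4 → Fin 4 → ℝ)
    (hg : ∀ a b, g a b = g b a)
    (W : Fin 4 → Fin 4 → Fin 4 → Fin 4 → ℝ)
    (hW3 : ∀ a b c d, W a b c d = W c d a b)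
    (S : Fin 4 → Fin 4 → ℝ)
    (hS : ∀ a b, S a b = S b a)
    (j a b c : Fin 4) :
    Ktensor g ginv S W j a b c = Ktensor g ginv S W j a c b := by
  have hQ : ∀ d e : Fin 4, (∑ p, ∑ q, ginv d p * ginv e q * S p q)
      = ∑ p, ∑ q, ginv e p * ginv d q * S p q := by
    intro d e
    rw [Finset.sum_comm]
    refine sum_congr rfl fun x _ => sum_congr rfl fun y _ => ?_
    rw [hS]; ring
  have h6 : (∑ d, ∑ e, (∑ p, ∑ q, ginv d p * ginv e q * S p q) * W b d c e)
      = ∑ d, ∑ e, (∑ p, ∑ q, ginv d p * ginv e q * S p q) * W c d b e := by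
    rw [Finset.sum_comm]
    refine sum_congr rfl fun x _ => sum_congr rfl fun y _ => ?_
    rw [hQ y x, hW3 b y c x]
  have h3 : (∑ d, (∑ e, S a e * ginv e d) * W b d c j)
      = ∑ d, (∑ e, S a e * ginv e d) * W c j b d := by
    refine sum_congr rfl fun x _ => ?_
    rw [hW3 b x c j]
  have h4 : (∑ d, (∑ e, S a e * ginv e d) * W b j c d)
      = ∑ d, (∑ e, S a e * ginv e d) * W c d b j := by
    refine sum_congr rfl fun x _ => ?_
    rw [hW3 b j c x]
  unfold Ktensor
  rw [h3, h4, h6, hg b c]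
  ring

/-- (i) `K_{jabc}` is symmetric in its last two indices;
(ii) `N_{j,cab} = (1/3)(K_{jabc} − K_{jbac})` is antisymmetric in `(a,b)` and satisfies
the cyclic identity `N_{j,cab} + N_{j,abc} + N_{j,bca} = 0`, i.e. it has the algebraic
symmetries of a Lanczos potential. -/
theorem Ktensor_symmetry_and_lanczos_candidate
    (g ginv : Fin 4 → Fin 4 → ℝ)
    (hg : ∀ a b, g a b = g b a)
    (hginv : ∀ a b, ∑ c, ginv a c * g c b = if a = b then (1 : ℝ) else 0)
    (W : Fin 4 → Fin 4 → Fin 4 → Fin 4 → ℝ)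
    (hW1 : ∀ a b c d, W a b c d = - W b a c d)
    (hW2 : ∀ a b c d, W a b c d = - W a b d c)
    (hW3 : ∀ a b c d, W a b c d = W c d a b)
    (hW4 : ∀ a b c d, W a b c d + W a c d b + W a d b c = 0)
    (hWtr : ∀ b d, ∑ a, ∑ c, ginv a c * W a b c d = 0)
    (S : Fin 4 → Fin 4 → ℝ)
    (hS : ∀ a b, S a b = S b a)
    (j a b c : Fin 4) :
    Ktensor g ginv S W j a b c = Ktensor g ginv S W j a c b
      ∧ Ntensor g ginv S W j c a b = - Ntensor g ginv S W j c b a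
      ∧ Ntensor g ginv S W j c a b + Ntensor g ginv S W j a b c
          + Ntensor g ginv S W j b c a = 0 := by
  have h1 := Ksymm_aux g ginv hg W hW3 S hS j a b c
  have h2 := Ksymm_aux g ginv hg W hW3 S hS j b c a
  have h3 := Ksymm_aux g ginv hg W hW3 S hS j c a b
  refine ⟨h1, by unfold Ntensor; ring, ?_⟩
  unfold Ntensor
  rw [h1, h2, h3]
  ring
end
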